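/- Let \(\mathfrak{u}\) be an abelian Lie algebra with basis \(u_1,\dots,u_n\), acting on a vector space \(V = V_{-2} \oplus V_0 \oplus V_2\) via a representation \(\rho_0\) (the restriction of the adjoint representation of \(\mathfrak{so}(n+1,1)\) to the nilpotent subalgebra \(\mathfrak{u}=V_2\)), where \([V, V_2] = V_0 \oplus V_2\). Then the map \(J: V_{-2} \to H^n(\mathfrak{u}, V)\) sending \(v \mapsto (u_1^* \wedge \cdots \wedge u_n^*) \otimes v\) is an isomorphism onto the top Lie algebra cohomology \(H^n(\mathfrak{u}, V_{\rho_0})\). -/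

import Mathlib

/-- The top-degree Chevalley–Eilenberg coboundary for an `n`-dimensional abelian Lie
algebra with chosen basis `u₁, …, uₙ` acting on `V` via `ρ` (where `ρ i = ρ₀(uᵢ)`):
an `(n-1)`-cochain is identified with its coefficients `A : Fin n → V`
(`φ = ∑ᵢ (u₁* ∧ ⋯ ∧ ûᵢ* ∧ ⋯ ∧ uₙ*) ⊗ Aᵢ`), and a top cochain
`(u₁* ∧ ⋯ ∧ uₙ*) ⊗ v` with its value `v ∈ V`; then
`dφ = (u₁* ∧ ⋯ ∧ uₙ*) ⊗ ∑ᵢ (-1)^{i+1} ρ₀(uᵢ) Aᵢ`. -/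
noncomputable def ceTopDiff {n : ℕ} {V : Type*} [AddCommGroup V] [Module ℝ V]
    (ρ : Fin n → Module.End ℝ V) : (Fin n → V) →ₗ[ℝ] V :=
  ∑ i : Fin n, ((-1 : ℝ) ^ ((i : ℕ) + 1)) • (ρ i).comp (LinearMap.proj i)

lemma ceTopDiff_apply {n : ℕ} {V : Type*} [AddCommGroup V] [Module ℝ V]
    (ρ : Fin n → Module.End ℝ V) (x : Fin n → V) :
    ceTopDiff ρ x = ∑ i : Fin n, ((-1 : ℝ) ^ ((i : ℕ) + 1)) • ρ i (x i) := by
  simp [ceTopDiff]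

lemma range_ceTopDiff {n : ℕ} {V : Type*} [AddCommGroup V] [Module ℝ V]
    (ρ : Fin n → Module.End ℝ V) :
    LinearMap.range (ceTopDiff ρ) = ⨆ i, LinearMap.range (ρ i) := by
  apply le_antisymm
  · rintro _ ⟨x, rfl⟩
    rw [ceTopDiff_apply]
    refine Submodule.sum_mem _ fun i _ => Submodule.smul_mem _ _ ?_
    exact le_iSup (fun i => LinearMap.range (ρ i)) i ⟨x i, rfl⟩
  · refine iSup_le fun i => ?_
    rintro _ ⟨v, rfl⟩
    refine ⟨Pi.single i (((-1 : ℝ) ^ ((i : ℕ) + 1)) • v), ?_⟩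
    rw [ceTopDiff_apply, Finset.sum_eq_single i]
    · rw [Pi.single_eq_same, map_smul, smul_smul, ← pow_add]
      have : ((i : ℕ) + 1) + ((i : ℕ) + 1) = 2 * ((i : ℕ) + 1) := by ring
      rw [this, pow_mul]
      norm_num
    · intro j _ hj
      rw [Pi.single_eq_of_ne hj]
      simp
    · simp

/-- for an abelian Lie algebra `𝔲` of dimension `n` acting on
`V = V₋₂ ⊕ V₀ ⊕ V₂` via `ρ₀` with `[V, V₂] = V₀ ⊕ V₂` (the joint image of the basis
operators `ρ₀(uᵢ)` is `V₀ ⊔ V₂`), the map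
`J : V₋₂ → Hⁿ(𝔲, V) = (top cochains)/(coboundaries)`, `v ↦ (u₁* ∧ ⋯ ∧ uₙ*) ⊗ v`,
is an isomorphism (a linear bijection). -/
theorem stmt_0 {n : ℕ} {V : Type*} [AddCommGroup V] [Module ℝ V]
    (Vneg V0 V2 : Submodule ℝ V)
    (ρ : Fin n → Module.End ℝ V)
    (hdirect : DirectSum.IsInternal (![Vneg, V0, V2] : Fin 3 → Submodule ℝ V))
    (hbracket : (⨆ i : Fin n, LinearMap.range (ρ i)) = V0 ⊔ V2) :
    Function.Bijective
      (((LinearMap.range (ceTopDiff ρ)).mkQ).comp Vneg.subtype) := by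
  have hrange : LinearMap.range (ceTopDiff ρ) = V0 ⊔ V2 := by
    rw [range_ceTopDiff, hbracket]
  obtain ⟨hind, hsup⟩ :=
    (DirectSum.isInternal_submodule_iff_iSupIndep_and_iSup_eq_top _).mp hdirect
  have hne : (⨆ j, ⨆ _ : j ≠ (0 : Fin 3), ![Vneg, V0, V2] j) = V0 ⊔ V2 := by
    apply le_antisymm
    · refine iSup_le fun j => iSup_le fun hj => ?_
      fin_cases j
      · exact absurd rfl hj
      · exact le_sup_left
      · exact le_sup_right
    · refine sup_le ?_ ?_
      · exact le_iSup₂_of_le (1 : Fin 3) (by decide) le_rfl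
      · exact le_iSup₂_of_le (2 : Fin 3) (by decide) le_rfl
  have hdisj : Disjoint Vneg (V0 ⊔ V2) := by
    have h0 := hind (0 : Fin 3)
    rwa [hne] at h0
  have htop : Vneg ⊔ (V0 ⊔ V2) = ⊤ := by
    rw [← hsup]
    refine le_antisymm ?_ ?_
    · refine sup_le ?_ (sup_le ?_ ?_)
      · simpa using le_iSup ![Vneg, V0, V2] (0 : Fin 3)
      · simpa using le_iSup ![Vneg, V0, V2] (1 : Fin 3)
      · simpa using le_iSup ![Vneg, V0, V2] (2 : Fin 3)
    · refine iSup_le fun j => ?_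
      fin_cases j
      · exact le_sup_left
      · exact le_sup_of_le_right le_sup_left
      · exact le_sup_of_le_right le_sup_right
  constructor
  · intro x y hxy
    have : (x : V) - (y : V) ∈ LinearMap.range (ceTopDiff ρ) := by
      rw [← Submodule.Quotient.eq]
      exact hxy
    rw [hrange] at this
    have hmem : (x : V) - (y : V) ∈ Vneg := sub_mem x.2 y.2
    have : (x : V) - (y : V) = 0 := by
      exact (Submodule.mem_bot ℝ).mp (hdisj.le_bot ⟨hmem, this⟩)
    exact Subtype.ext (sub_eq_zero.mp this)
  · intro z
    obtain ⟨v, rfl⟩ := Submodule.mkQ_surjective _ z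
    have hv : v ∈ Vneg ⊔ (V0 ⊔ V2) := htop ▸ Submodule.mem_top
    obtain ⟨a, ha, b, hb, rfl⟩ := Submodule.mem_sup.mp hv
    refine ⟨⟨a, ha⟩, ?_⟩
    simp only [LinearMap.comp_apply, Submodule.subtype_apply, Submodule.mkQ_apply]
    rw [Submodule.Quotient.eq]
    simpa [hrange] using hb
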